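/- In the common-panel factor-model setup, suppose α₁ = α₂ = α. Then a_{1,p} = a_{2,p} for every p and, for every x > 0, P(Q_p ≤ a_{1,p} x) → Ψ_α(x) · Ψ_α(x) = exp(−2x^{−α}) as p → ∞. (Corollary 1, second case.) -/

import Mathlib

open MeasureTheory ProbabilityTheory Filter

noncomputable section

/-- The Fréchet distribution function with tail index `α`. -/
def frechetCDF (α x : ℝ) : ℝ := if 0 < x then Real.exp (-x ^ (-α)) else 0

/-- The norming constant `a_p = (Σ_{i<p} σ_i^α)^{1/α}`. -/
def normConst (σ : ℕ → ℝ) (α : ℝ) (p : ℕ) : ℝ :=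
  (∑ i ∈ Finset.range p, σ i ^ α) ^ (1 / α)

/-- Maximum of the first `p₁` variables of the first group and the first `p₂`
variables of the second group. -/
def Qmax {Ω : Type*} (X₁ X₂ : ℕ → Ω → ℝ) (p₁ p₂ : ℕ) (ω : Ω) : ℝ :=
  max (⨆ i : Fin p₁, X₁ i ω) (⨆ j : Fin p₂, X₂ j ω)

/-- Codomains of the family consisting of the factor `Z` and the two noise arrays. -/
def mixCodom (d : ℕ) : Unit ⊕ ℕ ⊕ ℕ → Type
  | Sum.inl _ => Fin d → ℝ
  | Sum.inr _ => ℝ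

instance mixCodomMeasurableSpace (d : ℕ) : ∀ i, MeasurableSpace (mixCodom d i)
  | Sum.inl _ => inferInstanceAs (MeasurableSpace (Fin d → ℝ))
  | Sum.inr (Sum.inl _) => inferInstanceAs (MeasurableSpace ℝ)
  | Sum.inr (Sum.inr _) => inferInstanceAs (MeasurableSpace ℝ)

/-- The family consisting of the factor `Z` and the two noise arrays. -/
def mixFun {Ω : Type*} {d : ℕ} (Z : Ω → Fin d → ℝ) (ε₁ ε₂ : ℕ → Ω → ℝ) :
    ∀ i : Unit ⊕ ℕ ⊕ ℕ, Ω → mixCodom d i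
  | Sum.inl _ => Z
  | Sum.inr (Sum.inl i) => ε₁ i
  | Sum.inr (Sum.inr j) => ε₂ j

lemma sum_sigma_nonneg (σ : ℕ → ℝ) (α C₁ : ℝ) (hC₁ : 0 < C₁) (hσ : ∀ i, C₁ ≤ σ i) (p : ℕ) :
    0 ≤ ∑ i ∈ Finset.range p, σ i ^ α :=
  Finset.sum_nonneg fun i _ => Real.rpow_nonneg (le_trans hC₁.le (hσ i)) α

lemma normConst_rpow (σ : ℕ → ℝ) (α C₁ : ℝ) (hα : 0 < α) (hC₁ : 0 < C₁) (hσ : ∀ i, C₁ ≤ σ i)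
    (p : ℕ) : normConst σ α p ^ α = ∑ i ∈ Finset.range p, σ i ^ α := by
  rw [normConst, one_div, Real.rpow_inv_rpow (sum_sigma_nonneg σ α C₁ hC₁ hσ p) hα.ne']

lemma normConst_nonneg (σ : ℕ → ℝ) (α C₁ : ℝ) (hC₁ : 0 < C₁) (hσ : ∀ i, C₁ ≤ σ i) (p : ℕ) :
    0 ≤ normConst σ α p :=
  Real.rpow_nonneg (sum_sigma_nonneg σ α C₁ hC₁ hσ p) _

lemma normConst_tendsto_atTop (σ : ℕ → ℝ) (α C₁ : ℝ) (hα : 0 < α) (hC₁ : 0 < C₁)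
    (hσ : ∀ i, C₁ ≤ σ i) : Tendsto (normConst σ α) atTop atTop := by
  have h1 : ∀ p : ℕ, (p : ℝ) ^ (α⁻¹) * C₁ ≤ normConst σ α p := by
    intro p
    have hsum : (p : ℝ) * C₁ ^ α ≤ ∑ i ∈ Finset.range p, σ i ^ α := by
      calc (p : ℝ) * C₁ ^ α = ∑ _i ∈ Finset.range p, C₁ ^ α := by
            simp [Finset.sum_const, nsmul_eq_mul]
        _ ≤ _ := Finset.sum_le_sum fun i _ =>
            Real.rpow_le_rpow hC₁.le (hσ i) hα.le
    have h2 : ((p : ℝ) * C₁ ^ α) ^ (α⁻¹) ≤ normConst σ α p := by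
      rw [normConst, one_div]
      exact Real.rpow_le_rpow (by positivity) hsum (by positivity)
    calc (p : ℝ) ^ (α⁻¹) * C₁ = ((p : ℝ) * C₁ ^ α) ^ (α⁻¹) := by
          rw [Real.mul_rpow (by positivity) (by positivity), Real.rpow_rpow_inv hC₁.le hα.ne']
      _ ≤ _ := h2
  exact tendsto_atTop_mono h1
    (((tendsto_rpow_atTop (by positivity)).comp tendsto_natCast_atTop_atTop).atTop_mul_const hC₁)

lemma squeeze_delta {L : ℝ} (hL : 0 ≤ L) {s : ℕ → ℝ} {l u : ℝ → ℕ → ℝ}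
    (hl : ∀ δ ∈ Set.Ioo (0:ℝ) 1, Tendsto (l δ) atTop (nhds ((1-δ)*L)))
    (hu : ∀ δ ∈ Set.Ioo (0:ℝ) 1, Tendsto (u δ) atTop (nhds ((1+δ)*L)))
    (hle : ∀ δ ∈ Set.Ioo (0:ℝ) 1, ∀ᶠ p in atTop, l δ p ≤ s p ∧ s p ≤ u δ p) :
    Tendsto s atTop (nhds L) := by
  rw [tendsto_order]
  constructor
  · intro b hb
    set δ := min (1/2 : ℝ) ((L - b)/(2*(L+1))) with hδdef
    have hδ0 : 0 < δ := lt_min (by norm_num) (div_pos (by linarith) (by linarith))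
    have hδ1 : δ < 1 := lt_of_le_of_lt (min_le_left _ _) (by norm_num)
    have hδle : δ ≤ (L - b)/(2*(L+1)) := min_le_right _ _
    have key : b < (1-δ)*L := by
      have h2 : δ * L ≤ ((L - b)/(2*(L+1))) * L := mul_le_mul_of_nonneg_right hδle hL
      have h3 : ((L - b)/(2*(L+1))) * L ≤ (L - b)/2 := by
        rw [div_mul_eq_mul_div, div_le_div_iff₀ (by positivity) (by norm_num)]
        nlinarith
      nlinarith
    filter_upwards [(hl δ ⟨hδ0, hδ1⟩).eventually (eventually_gt_nhds key),
      hle δ ⟨hδ0, hδ1⟩] with p h1 h2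
    linarith [h2.1]
  · intro b hb
    set δ := min (1/2 : ℝ) ((b - L)/(2*(L+1))) with hδdef
    have hδ0 : 0 < δ := lt_min (by norm_num) (div_pos (by linarith) (by linarith))
    have hδ1 : δ < 1 := lt_of_le_of_lt (min_le_left _ _) (by norm_num)
    have hδle : δ ≤ (b - L)/(2*(L+1)) := min_le_right _ _
    have key : (1+δ)*L < b := by
      have h2 : δ * L ≤ ((b - L)/(2*(L+1))) * L := mul_le_mul_of_nonneg_right hδle hL
      have h3 : ((b - L)/(2*(L+1))) * L ≤ (b - L)/2 := by
        rw [div_mul_eq_mul_div, div_le_div_iff₀ (by positivity) (by norm_num)]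
        nlinarith
      nlinarith
    filter_upwards [(hu δ ⟨hδ0, hδ1⟩).eventually (eventually_lt_nhds key),
      hle δ ⟨hδ0, hδ1⟩] with p h1 h2
    linarith [h2.2]

lemma rpow_div_neg {A s : ℝ} (hA : 0 ≤ A) (hs : 0 < s) (α : ℝ) :
    (A/s) ^ (-α) = s ^ α * A ^ (-α) := by
  rw [Real.div_rpow hA hs.le, Real.rpow_neg hs.le, div_eq_mul_inv, inv_inv, mul_comm]

lemma core_sum (α C₁ C₂ x M : ℝ) (σ c : ℕ → ℝ) (G : ℝ → ℝ)
    (hα : 0 < α) (hC₁ : 0 < C₁) (hC₁₂ : C₁ ≤ C₂) (hx : 0 < x) (hM : 0 ≤ M)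
    (hσ : ∀ i, σ i ∈ Set.Icc C₁ C₂) (hc : ∀ i, |c i| ≤ M)
    (htail : Tendsto (fun t => t ^ α * G t) atTop (nhds 1)) :
    Tendsto (fun p => ∑ i ∈ Finset.range p, G ((normConst σ α p * x - c i) / σ i))
      atTop (nhds (x ^ (-α))) := by
  have hσ1 : ∀ i, C₁ ≤ σ i := fun i => (hσ i).1
  have hσpos : ∀ i, 0 < σ i := fun i => hC₁.trans_le (hσ1 i)
  have hC₂ : 0 < C₂ := hC₁.trans_le hC₁₂
  set a := normConst σ α with ha_def
  have ha : Tendsto a atTop atTop := normConst_tendsto_atTop σ α C₁ hα hC₁ hσ1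
  have ha0 : ∀ p, 0 ≤ a p := normConst_nonneg σ α C₁ hC₁ hσ1
  have haα : ∀ p, a p ^ α = ∑ i ∈ Finset.range p, σ i ^ α :=
    normConst_rpow σ α C₁ hα hC₁ hσ1
  have hax : Tendsto (fun p => a p * x) atTop atTop := ha.atTop_mul_const hx
  have hMdiv : Tendsto (fun p => M / a p) atTop (nhds 0) := tendsto_const_nhds.div_atTop ha
  refine squeeze_delta (L := x ^ (-α)) (Real.rpow_nonneg hx.le _)
    (l := fun δ p => (1-δ) * ((x + M / a p) ^ (-α)))
    (u := fun δ p => (1+δ) * ((x - M / a p) ^ (-α))) ?_ ?_ ?_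
  · intro δ _
    have : Tendsto (fun p => x + M / a p) atTop (nhds x) := by
      simpa using tendsto_const_nhds.add hMdiv
    exact (tendsto_const_nhds.mul (this.rpow_const (Or.inl hx.ne')))
  · intro δ _
    have : Tendsto (fun p => x - M / a p) atTop (nhds x) := by
      simpa using tendsto_const_nhds.sub hMdiv
    exact (tendsto_const_nhds.mul (this.rpow_const (Or.inl hx.ne')))
  · intro δ ⟨hδ0, hδ1⟩
    have h1 : ∀ᶠ t in atTop, t ^ α * G t < 1 + δ :=
      htail.eventually (eventually_lt_nhds (by linarith))
    have h2 : ∀ᶠ t in atTop, 1 - δ < t ^ α * G t :=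
      htail.eventually (eventually_gt_nhds (by linarith))
    obtain ⟨T, hT⟩ := eventually_atTop.1 ((h1.and h2).and (eventually_ge_atTop 1))
    have hT0 : 0 < T := by
      rcases hT T le_rfl with ⟨_, h⟩; linarith
    filter_upwards [hax.eventually_ge_atTop (C₂ * T + M + 1)] with p hp
    -- setup per-index facts
    have hApos : 0 < a p * x - M := by nlinarith
    have hBpos : 0 < a p * x + M := by nlinarith
    have hap0 : 0 < a p := by
      rcases lt_or_ge 0 (a p) with h | h
      · exact h
      · exfalso; nlinarith
    have key : ∀ i, (1-δ) * (σ i ^ α * (a p * x + M) ^ (-α)) ≤ G ((a p * x - c i) / σ i) ∧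
        G ((a p * x - c i) / σ i) ≤ (1+δ) * (σ i ^ α * (a p * x - M) ^ (-α)) := by
      intro i
      set t := (a p * x - c i) / σ i with ht_def
      have hci := abs_le.1 (hc i)
      have htlow : (a p * x - M) / σ i ≤ t :=
        (div_le_div_iff_of_pos_right (hσpos i)).2 (by linarith [hci.2])
      have hthigh : t ≤ (a p * x + M) / σ i :=
        (div_le_div_iff_of_pos_right (hσpos i)).2 (by linarith [hci.1])
      have htT : T ≤ t := by
        have h1 : (a p * x - M) / C₂ ≤ (a p * x - M) / σ i :=
          div_le_div_of_nonneg_left hApos.le (hσpos i) (hσ i).2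
        have h2 : T ≤ (a p * x - M) / C₂ := by
          rw [le_div_iff₀ hC₂]; nlinarith
        linarith
      have ht1 : (1:ℝ) ≤ t := le_trans (hT t htT).2 le_rfl
      have htpos : 0 < t := by linarith
      obtain ⟨⟨hlt, hgt⟩, -⟩ := hT t htT
      have htα : 0 < t ^ α := Real.rpow_pos_of_pos htpos α
      have hGub : G t ≤ (1+δ) * t ^ (-α) := by
        rw [Real.rpow_neg htpos.le]
        rw [mul_comm] at hlt
        have := (le_div_iff₀ htα).2 hlt.le
        calc G t ≤ (1+δ) / t ^ α := this
          _ = (1+δ) * (t ^ α)⁻¹ := by rw [div_eq_mul_inv]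
      have hGlb : (1-δ) * t ^ (-α) ≤ G t := by
        rw [Real.rpow_neg htpos.le]
        rw [mul_comm] at hgt
        have := (div_le_iff₀ htα).2 hgt.le
        calc (1-δ) * (t ^ α)⁻¹ = (1-δ) / t ^ α := by rw [div_eq_mul_inv]
          _ ≤ G t := this
      have hta : t ^ (-α) ≤ σ i ^ α * (a p * x - M) ^ (-α) := by
        rw [← rpow_div_neg hApos.le (hσpos i)]
        exact Real.rpow_le_rpow_of_nonpos (div_pos hApos (hσpos i)) htlow (by linarith)
      have htb : σ i ^ α * (a p * x + M) ^ (-α) ≤ t ^ (-α) := by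
        rw [← rpow_div_neg hBpos.le (hσpos i)]
        exact Real.rpow_le_rpow_of_nonpos htpos hthigh (by linarith)
      constructor
      · calc (1-δ) * (σ i ^ α * (a p * x + M) ^ (-α)) ≤ (1-δ) * t ^ (-α) :=
            mul_le_mul_of_nonneg_left htb (by linarith)
          _ ≤ G t := hGlb
      · calc G t ≤ (1+δ) * t ^ (-α) := hGub
          _ ≤ (1+δ) * (σ i ^ α * (a p * x - M) ^ (-α)) :=
            mul_le_mul_of_nonneg_left hta (by linarith)
    have hsum_eq : ∀ y : ℝ, (∑ i ∈ Finset.range p, σ i ^ α) * y ^ (-α) = a p ^ α * y ^ (-α) := by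
      intro y; rw [haα]
    constructor
    · calc (1-δ) * ((x + M / a p) ^ (-α))
          = (1-δ) * (a p ^ α * (a p * x + M) ^ (-α)) := by
            rw [show x + M / a p = (a p * x + M) / a p by field_simp,
              rpow_div_neg hBpos.le hap0]
        _ = ∑ i ∈ Finset.range p, (1-δ) * (σ i ^ α * (a p * x + M) ^ (-α)) := by
            rw [← Finset.mul_sum, ← Finset.sum_mul, ← haα]
        _ ≤ _ := Finset.sum_le_sum fun i _ => (key i).1
    · calc ∑ i ∈ Finset.range p, G ((a p * x - c i) / σ i)
          ≤ ∑ i ∈ Finset.range p, (1+δ) * (σ i ^ α * (a p * x - M) ^ (-α)) :=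
            Finset.sum_le_sum fun i _ => (key i).2
        _ = (1+δ) * (a p ^ α * (a p * x - M) ^ (-α)) := by
            rw [← Finset.mul_sum, ← Finset.sum_mul, ← haα]
        _ = (1+δ) * ((x - M / a p) ^ (-α)) := by
            rw [show x - M / a p = (a p * x - M) / a p by field_simp,
              rpow_div_neg hApos.le hap0]

lemma core_prod (α C₁ C₂ x M : ℝ) (σ c : ℕ → ℝ) (G : ℝ → ℝ)
    (hα : 0 < α) (hC₁ : 0 < C₁) (hC₁₂ : C₁ ≤ C₂) (hx : 0 < x) (hM : 0 ≤ M)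
    (hσ : ∀ i, σ i ∈ Set.Icc C₁ C₂) (hc : ∀ i, |c i| ≤ M)
    (hG0 : ∀ t, 0 ≤ G t)
    (htail : Tendsto (fun t => t ^ α * G t) atTop (nhds 1)) :
    Tendsto (fun p => ∏ i ∈ Finset.range p, (1 - G ((normConst σ α p * x - c i) / σ i)))
      atTop (nhds (Real.exp (-(x ^ (-α))))) := by
  have hσ1 : ∀ i, C₁ ≤ σ i := fun i => (hσ i).1
  have hσpos : ∀ i, 0 < σ i := fun i => hC₁.trans_le (hσ1 i)
  have hC₂ : 0 < C₂ := hC₁.trans_le hC₁₂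
  set a := normConst σ α with ha_def
  have ha : Tendsto a atTop atTop := normConst_tendsto_atTop σ α C₁ hα hC₁ hσ1
  have hax : Tendsto (fun p => a p * x) atTop atTop := ha.atTop_mul_const hx
  have hA : Tendsto (fun p => a p * x - M) atTop atTop :=
    tendsto_atTop_add_const_right _ (-M) hax
  set η : ℕ → ℝ := fun p => 2 * C₂ ^ α * (a p * x - M) ^ (-α) with hη_def
  have hη0 : Tendsto η atTop (nhds 0) := by
    have h := (tendsto_rpow_neg_atTop hα).comp hA
    have := h.const_mul (2 * C₂ ^ α)
    simpa using this
  have hsum := core_sum α C₁ C₂ x M σ c G hα hC₁ hC₁₂ hx hM hσ hc htail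
  set s : ℕ → ℝ := fun p => ∑ i ∈ Finset.range p, G ((a p * x - c i) / σ i) with hs_def
  -- eventual per-term bound : for i < p, G (t i) ≤ η p
  have h1 : ∀ᶠ t in atTop, t ^ α * G t < 2 :=
    htail.eventually (eventually_lt_nhds (by norm_num))
  obtain ⟨T, hT⟩ := eventually_atTop.1 (h1.and (eventually_ge_atTop 1))
  have hT0 : 0 < T := by rcases hT T le_rfl with ⟨_, h⟩; linarith
  have hbound : ∀ᶠ p in atTop, ∀ i ∈ Finset.range p,
      G ((a p * x - c i) / σ i) ≤ η p := by
    filter_upwards [hax.eventually_ge_atTop (C₂ * T + M + 1)] with p hp i _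
    have hApos : 0 < a p * x - M := by nlinarith
    set t := (a p * x - c i) / σ i with ht_def
    have hci := abs_le.1 (hc i)
    have htlow : (a p * x - M) / σ i ≤ t :=
      (div_le_div_iff_of_pos_right (hσpos i)).2 (by linarith [hci.2])
    have htT : T ≤ t := by
      have h1' : (a p * x - M) / C₂ ≤ (a p * x - M) / σ i :=
        div_le_div_of_nonneg_left hApos.le (hσpos i) (hσ i).2
      have h2' : T ≤ (a p * x - M) / C₂ := by
        rw [le_div_iff₀ hC₂]; nlinarith
      linarith
    obtain ⟨hlt, ht1⟩ := hT t htT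
    have htpos : 0 < t := by linarith
    have htα : 0 < t ^ α := Real.rpow_pos_of_pos htpos α
    have hGub : G t ≤ 2 * t ^ (-α) := by
      rw [Real.rpow_neg htpos.le]
      rw [mul_comm] at hlt
      have h3 := (le_div_iff₀ htα).2 hlt.le
      calc G t ≤ 2 / t ^ α := h3
        _ = 2 * (t ^ α)⁻¹ := by rw [div_eq_mul_inv]
    have hta : t ^ (-α) ≤ σ i ^ α * (a p * x - M) ^ (-α) := by
      rw [← rpow_div_neg hApos.le (hσpos i)]
      exact Real.rpow_le_rpow_of_nonpos (div_pos hApos (hσpos i)) htlow (by linarith)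
    have hσα : σ i ^ α ≤ C₂ ^ α := Real.rpow_le_rpow (hσpos i).le (hσ i).2 hα.le
    calc G t ≤ 2 * t ^ (-α) := hGub
      _ ≤ 2 * (σ i ^ α * (a p * x - M) ^ (-α)) := by linarith
      _ ≤ η p := by
          have h5 : η p = 2 * C₂ ^ α * (a p * x - M) ^ (-α) := rfl
          rw [h5]
          have h4 : (0:ℝ) ≤ (a p * x - M) ^ (-α) := Real.rpow_nonneg hApos.le _
          have h6 := mul_le_mul_of_nonneg_right hσα h4
          nlinarith
  have hηhalf : ∀ᶠ p in atTop, η p ≤ 1/2 :=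
    hη0.eventually (eventually_le_nhds (by norm_num))
  -- squeeze
  have hlow : Tendsto (fun p => Real.exp (-(s p / (1 - η p)))) atTop
      (nhds (Real.exp (-(x ^ (-α))))) := by
    have hden : Tendsto (fun p => 1 - η p) atTop (nhds 1) := by
      simpa using tendsto_const_nhds.sub hη0
    have hq : Tendsto (fun p => -(s p / (1 - η p))) atTop (nhds (-(x ^ (-α)))) := by
      have := (hsum.div hden (by norm_num)).neg
      simpa using this
    have h := (Real.continuous_exp.tendsto (-(x ^ (-α)))).comp hq
    exact h
  have hup : Tendsto (fun p => Real.exp (-(s p))) atTop (nhds (Real.exp (-(x ^ (-α))))) := by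
    have h := (Real.continuous_exp.tendsto (-(x ^ (-α)))).comp hsum.neg
    exact h
  refine tendsto_of_tendsto_of_tendsto_of_le_of_le' hlow hup ?_ ?_
  · -- lower bound eventually
    filter_upwards [hbound, hηhalf, hA.eventually_ge_atTop 1] with p hb hη2 hp1
    have hηnn : 0 ≤ η p :=
      mul_nonneg (by positivity) (Real.rpow_nonneg (by linarith) _)
    have hden : (0:ℝ) < 1 - η p := by linarith
    have per : ∀ i ∈ Finset.range p,
        Real.exp (-(G ((a p * x - c i) / σ i) / (1 - η p)))
          ≤ 1 - G ((a p * x - c i) / σ i) := by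
      intro i hi
      set g := G ((a p * x - c i) / σ i) with hg_def
      have hg0 : 0 ≤ g := hG0 _
      have hgη : g ≤ η p := hb i hi
      have hg2 : g ≤ 1/2 := hgη.trans hη2
      have h1g : (0:ℝ) < 1 - g := by linarith
      have hquot : g / (1 - g) ≤ g / (1 - η p) :=
        div_le_div_of_nonneg_left hg0 hden (by linarith)
      have h2 : Real.exp (-(g / (1 - g))) ≤ 1 - g := by
        have hu := Real.add_one_le_exp (g / (1 - g))
        have hpos : (0:ℝ) < g / (1 - g) + 1 := by positivity
        rw [Real.exp_neg]
        calc (Real.exp (g / (1 - g)))⁻¹ ≤ (g / (1 - g) + 1)⁻¹ := by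
              apply inv_anti₀ hpos hu
          _ = 1 - g := by
              rw [show g / (1 - g) + 1 = (1 - g)⁻¹ by field_simp; ring, inv_inv]
      calc Real.exp (-(g / (1 - η p))) ≤ Real.exp (-(g / (1 - g))) :=
            Real.exp_le_exp.2 (neg_le_neg hquot)
        _ ≤ 1 - g := h2
    calc Real.exp (-(s p / (1 - η p)))
        = ∏ i ∈ Finset.range p, Real.exp (-(G ((a p * x - c i) / σ i) / (1 - η p))) := by
          rw [← Real.exp_sum]
          congr 1
          simp only [hs_def]
          rw [Finset.sum_neg_distrib, Finset.sum_div]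
      _ ≤ ∏ i ∈ Finset.range p, (1 - G ((a p * x - c i) / σ i)) :=
          Finset.prod_le_prod (fun i _ => (Real.exp_pos _).le) per
  · -- upper bound eventually
    filter_upwards [hbound, hηhalf] with p hb hη2
    calc ∏ i ∈ Finset.range p, (1 - G ((a p * x - c i) / σ i))
        ≤ ∏ i ∈ Finset.range p, Real.exp (-G ((a p * x - c i) / σ i)) := by
          refine Finset.prod_le_prod (fun i hi => ?_) (fun i hi => ?_)
          · have h1 := hb i hi; have h2 := hG0 ((a p * x - c i) / σ i); linarith
          · have h3 := Real.add_one_le_exp (-G ((a p * x - c i) / σ i)); linarith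
      _ = Real.exp (-(s p)) := by
          rw [← Real.exp_sum]
          congr 1
          simp only [hs_def]
          rw [Finset.sum_neg_distrib]

def mixSet (d : ℕ) (b₁ b₂ : ℕ → ℝ) : ∀ j : Unit ⊕ ℕ ⊕ ℕ, Set (mixCodom d j)
  | Sum.inl _ => Set.univ
  | Sum.inr (Sum.inl i) => (Set.Iic (b₁ i) : Set ℝ)
  | Sum.inr (Sum.inr i) => (Set.Iic (b₂ i) : Set ℝ)

def Tset (p : ℕ) : Finset (Unit ⊕ ℕ ⊕ ℕ) :=
  ((Finset.range p).image fun i => (Sum.inr (Sum.inl i) : Unit ⊕ ℕ ⊕ ℕ)) ∪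
    ((Finset.range p).image fun i => (Sum.inr (Sum.inr i) : Unit ⊕ ℕ ⊕ ℕ))

section prob
variable {Ω : Type*} [MeasurableSpace Ω] {P : Measure Ω} [IsProbabilityMeasure P]
variable {d : ℕ} {Z : Ω → Fin d → ℝ} {ε₁ ε₂ : ℕ → Ω → ℝ}

lemma mix_measurable (hZm : Measurable Z) (hε₁m : ∀ i, Measurable (ε₁ i))
    (hε₂m : ∀ i, Measurable (ε₂ i)) : ∀ j, Measurable (mixFun Z ε₁ ε₂ j)
  | Sum.inl _ => hZm
  | Sum.inr (Sum.inl i) => hε₁m i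
  | Sum.inr (Sum.inr i) => hε₂m i

lemma mem_Tset_l {p : ℕ} (i : Fin p) :
    (Sum.inr (Sum.inl (i : ℕ)) : Unit ⊕ ℕ ⊕ ℕ) ∈ Tset p := by
  simp only [Tset, Finset.mem_union, Finset.mem_image, Finset.mem_range]
  exact Or.inl ⟨i.1, i.2, rfl⟩

lemma mem_Tset_r {p : ℕ} (i : Fin p) :
    (Sum.inr (Sum.inr (i : ℕ)) : Unit ⊕ ℕ ⊕ ℕ) ∈ Tset p := by
  simp only [Tset, Finset.mem_union, Finset.mem_image, Finset.mem_range]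
  exact Or.inr ⟨i.1, i.2, rfl⟩

lemma indep_Z_pair (hZm : Measurable Z) (hε₁m : ∀ i, Measurable (ε₁ i))
    (hε₂m : ∀ i, Measurable (ε₂ i))
    (hindep : iIndepFun (m := fun i => mixCodomMeasurableSpace d i) (mixFun Z ε₁ ε₂) P) (p : ℕ) :
    IndepFun Z (fun ω => ((fun i : Fin p => ε₁ i ω), (fun i : Fin p => ε₂ i ω))) P := by
  have hdisj : Disjoint ({Sum.inl ()} : Finset (Unit ⊕ ℕ ⊕ ℕ)) (Tset p) := by
    simp [Finset.disjoint_left, Tset]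
  have h := hindep.indepFun_finset {Sum.inl ()} (Tset p) hdisj
    (mix_measurable hZm hε₁m hε₂m)
  have hmem : (Sum.inl () : Unit ⊕ ℕ ⊕ ℕ) ∈ ({Sum.inl ()} : Finset (Unit ⊕ ℕ ⊕ ℕ)) := by simp
  have h2 := h.comp (_mγ := mixCodomMeasurableSpace d (Sum.inl ()))
    (_mγ' := (inferInstance : MeasurableSpace ((Fin p → ℝ) × (Fin p → ℝ))))
    (φ := fun v : (∀ j : ({Sum.inl ()} : Finset (Unit ⊕ ℕ ⊕ ℕ)), mixCodom d j) =>
      v ⟨Sum.inl (), hmem⟩)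
    (ψ := fun v : (∀ j : (Tset p : Finset (Unit ⊕ ℕ ⊕ ℕ)), mixCodom d j) =>
      ((fun i : Fin p => v ⟨Sum.inr (Sum.inl i), mem_Tset_l i⟩ : Fin p → ℝ),
       (fun i : Fin p => v ⟨Sum.inr (Sum.inr i), mem_Tset_r i⟩ : Fin p → ℝ)))
    (measurable_pi_apply _)
    ((measurable_pi_lambda _ fun (i : Fin p) => measurable_pi_apply
        (⟨Sum.inr (Sum.inl (i : ℕ)), mem_Tset_l i⟩ : (Tset p : Finset (Unit ⊕ ℕ ⊕ ℕ)))).prodMk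
      (measurable_pi_lambda _ fun (i : Fin p) => measurable_pi_apply
        (⟨Sum.inr (Sum.inr (i : ℕ)), mem_Tset_r i⟩ : (Tset p : Finset (Unit ⊕ ℕ ⊕ ℕ)))))
  exact h2

lemma prod_formula (hε₁m : ∀ i, Measurable (ε₁ i)) (hε₂m : ∀ i, Measurable (ε₂ i))
    (hindep : iIndepFun (m := fun i => mixCodomMeasurableSpace d i) (mixFun Z ε₁ ε₂) P)
    (p : ℕ) (b₁ b₂ : ℕ → ℝ) :
    P {ω | ∀ i : Fin p, ε₁ i ω ≤ b₁ i ∧ ε₂ i ω ≤ b₂ i}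
      = (∏ i ∈ Finset.range p, P {ω | ε₁ i ω ≤ b₁ i}) *
        ∏ i ∈ Finset.range p, P {ω | ε₂ i ω ≤ b₂ i} := by
  have hset : {ω | ∀ i : Fin p, ε₁ i ω ≤ b₁ i ∧ ε₂ i ω ≤ b₂ i}
      = ⋂ j ∈ Tset p, (mixFun Z ε₁ ε₂ j ⁻¹' mixSet d b₁ b₂ j) := by
    ext ω
    simp only [Set.mem_setOf_eq, Set.mem_iInter, Tset, Finset.mem_union, Finset.mem_image,
      Finset.mem_range]
    constructor
    · rintro h j (⟨a, ha, rfl⟩ | ⟨a, ha, rfl⟩)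
      · exact (h ⟨a, ha⟩).1
      · exact (h ⟨a, ha⟩).2
    · intro h i
      exact ⟨h _ (Or.inl ⟨i.1, i.2, rfl⟩), h _ (Or.inr ⟨i.1, i.2, rfl⟩)⟩
  have hdisj : Disjoint ((Finset.range p).image fun i => (Sum.inr (Sum.inl i) : Unit ⊕ ℕ ⊕ ℕ))
      ((Finset.range p).image fun i => (Sum.inr (Sum.inr i) : Unit ⊕ ℕ ⊕ ℕ)) := by
    simp [Finset.disjoint_left]
  rw [hset, hindep.meas_biInter (fun j hj => ?_), Tset,
    Finset.prod_union hdisj, Finset.prod_image (by intro a _ b _ h; simpa using h),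
    Finset.prod_image (by intro a _ b _ h; simpa using h)]
  · rfl
  · rcases j with j | j | j
    · exact ⟨Set.univ, MeasurableSet.univ, rfl⟩
    · exact ⟨(Set.Iic (b₁ j) : Set ℝ), (measurableSet_Iic : MeasurableSet (Set.Iic (b₁ j))), rfl⟩
    · exact ⟨(Set.Iic (b₂ j) : Set ℝ), (measurableSet_Iic : MeasurableSet (Set.Iic (b₂ j))), rfl⟩


lemma prob_eq {f : ℕ → (Fin d → ℝ) → ℝ} {σ : ℕ → ℝ} {X₁ X₂ : ℕ → Ω → ℝ}
    (hZm : Measurable Z) (hfm : ∀ i, Measurable (f i)) (hσpos : ∀ i, 0 < σ i)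
    (hε₁m : ∀ i, Measurable (ε₁ i)) (hε₂m : ∀ i, Measurable (ε₂ i))
    (hid₁ : ∀ i, IdentDistrib (ε₁ i) (ε₁ 0) P P)
    (hid₂ : ∀ i, IdentDistrib (ε₂ i) (ε₂ 0) P P)
    (hindep : iIndepFun (m := fun i => mixCodomMeasurableSpace d i) (mixFun Z ε₁ ε₂) P)
    (hX₁ : ∀ i ω, X₁ i ω = f i (Z ω) + σ i * ε₁ i ω)
    (hX₂ : ∀ i ω, X₂ i ω = f i (Z ω) + σ i * ε₂ i ω)
    (p : ℕ) (hp : 0 < p) (y : ℝ) :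
    (P {ω | Qmax X₁ X₂ p p ω ≤ y}).toReal
      = ∫ z, (∏ i ∈ Finset.range p, (P {ω | ε₁ 0 ω ≤ (y - f i z) / σ i}).toReal) *
          (∏ i ∈ Finset.range p, (P {ω | ε₂ 0 ω ≤ (y - f i z) / σ i}).toReal) ∂(P.map Z) := by
  haveI : Nonempty (Fin p) := ⟨⟨0, hp⟩⟩
  set U : Ω → (Fin p → ℝ) × (Fin p → ℝ) :=
    fun ω => (fun i : Fin p => ε₁ i ω, fun i : Fin p => ε₂ i ω) with hU
  have hUm : Measurable U := by
    rw [hU]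
    exact Measurable.prodMk
      (measurable_pi_lambda (fun ω (i : Fin p) => ε₁ (i : ℕ) ω) fun i => hε₁m (i : ℕ))
      (measurable_pi_lambda (fun ω (i : Fin p) => ε₂ (i : ℕ) ω) fun i => hε₂m (i : ℕ))
  haveI : IsProbabilityMeasure (P.map U) := Measure.isProbabilityMeasure_map hUm.aemeasurable
  set S : Set ((Fin d → ℝ) × ((Fin p → ℝ) × (Fin p → ℝ))) :=
    {w | ∀ i : Fin p, f i w.1 + σ i * w.2.1 i ≤ y ∧ f i w.1 + σ i * w.2.2 i ≤ y} with hS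
  have hSm : MeasurableSet S := by
    have h : S = ⋂ i : Fin p, ({w : (Fin d → ℝ) × ((Fin p → ℝ) × (Fin p → ℝ)) |
        f i w.1 + σ i * w.2.1 i ≤ y} ∩ {w | f i w.1 + σ i * w.2.2 i ≤ y}) := by
      ext w; simp [hS, Set.mem_iInter, forall_and]
    rw [h]
    refine MeasurableSet.iInter fun i => MeasurableSet.inter ?_ ?_
    · exact measurableSet_le (((hfm i).comp measurable_fst).add
        (measurable_const.mul ((measurable_pi_apply i).comp
          (measurable_fst.comp measurable_snd)))) measurable_const
    · exact measurableSet_le (((hfm i).comp measurable_fst).add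
        (measurable_const.mul ((measurable_pi_apply i).comp
          (measurable_snd.comp measurable_snd)))) measurable_const
  have hev : {ω | Qmax X₁ X₂ p p ω ≤ y} = (fun ω => (Z ω, U ω)) ⁻¹' S := by
    ext ω
    simp only [Set.mem_setOf_eq, Set.mem_preimage, Qmax, max_le_iff, hS, hU]
    rw [ciSup_le_iff (Set.Finite.bddAbove (Set.finite_range _)),
      ciSup_le_iff (Set.Finite.bddAbove (Set.finite_range _))]
    constructor
    · rintro ⟨h1, h2⟩ i
      refine ⟨?_, ?_⟩
      · have := h1 i; rwa [hX₁ i ω] at this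
      · have := h2 i; rwa [hX₂ i ω] at this
    · intro h
      refine ⟨fun i => ?_, fun i => ?_⟩
      · rw [hX₁ i ω]; exact (h i).1
      · rw [hX₂ i ω]; exact (h i).2
  have hmap : P.map (fun ω => (Z ω, U ω)) = (P.map Z).prod (P.map U) :=
    (indepFun_iff_map_prod_eq_prod_map_map hZm.aemeasurable hUm.aemeasurable).1
      (indep_Z_pair hZm hε₁m hε₂m hindep p)
  have key : P {ω | Qmax X₁ X₂ p p ω ≤ y}
      = ∫⁻ z, (P.map U) (Prod.mk z ⁻¹' S) ∂(P.map Z) := by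
    rw [hev, ← Measure.map_apply (hZm.prodMk hUm) hSm, hmap, Measure.prod_apply hSm]
  have hsect : ∀ z, (P.map U) (Prod.mk z ⁻¹' S)
      = (∏ i ∈ Finset.range p, P {ω | ε₁ 0 ω ≤ (y - f i z) / σ i}) *
        ∏ i ∈ Finset.range p, P {ω | ε₂ 0 ω ≤ (y - f i z) / σ i} := by
    intro z
    rw [Measure.map_apply hUm (hSm.preimage measurable_prodMk_left)]
    have hpre : U ⁻¹' (Prod.mk z ⁻¹' S)
        = {ω | ∀ i : Fin p, ε₁ i ω ≤ (y - f i z) / σ i ∧ ε₂ i ω ≤ (y - f i z) / σ i} := by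
      ext ω
      simp only [Set.mem_preimage, Set.mem_setOf_eq, hS, hU]
      refine forall_congr' fun i => and_congr ?_ ?_ <;>
        rw [le_div_iff₀ (hσpos i)] <;>
        constructor <;> intro h <;> nlinarith [h]
    rw [hpre, prod_formula hε₁m hε₂m hindep p (fun i => (y - f i z) / σ i)
      (fun i => (y - f i z) / σ i)]
    congr 1
    · exact Finset.prod_congr rfl fun i _ => (hid₁ i).measure_mem_eq measurableSet_Iic
    · exact Finset.prod_congr rfl fun i _ => (hid₂ i).measure_mem_eq measurableSet_Iic
  rw [key]
  have hmeas : Measurable fun z => (P.map U) (Prod.mk z ⁻¹' S) :=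
    measurable_measure_prodMk_left hSm
  rw [← MeasureTheory.integral_toReal hmeas.aemeasurable
    (Filter.Eventually.of_forall fun z => prob_le_one.trans_lt ENNReal.one_lt_top)]
  have hfun : (fun z => ((P.map U) (Prod.mk z ⁻¹' S)).toReal)
      = fun z => (∏ i ∈ Finset.range p, (P {ω | ε₁ 0 ω ≤ (y - f i z) / σ i}).toReal) *
          (∏ i ∈ Finset.range p, (P {ω | ε₂ 0 ω ≤ (y - f i z) / σ i}).toReal) := by
    funext z
    rw [hsect z, ENNReal.toReal_mul, ENNReal.toReal_prod, ENNReal.toReal_prod]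
  rw [hfun]

end prob

/-- Corollary 1, second case: if `α₁ = α₂ = α` then `a_{1,p} = a_{2,p}` for every `p` and `P(Q_p ≤ a_{1,p} x) → Ψ_α(x)·Ψ_α(x) = exp(−2x^{−α})` for every `x > 0`. -/
theorem coro1_case2
    {Ω : Type*} [MeasurableSpace Ω] (P : Measure Ω) [IsProbabilityMeasure P]
    (d : ℕ) (Z : Ω → Fin d → ℝ) (hZm : Measurable Z)
    (f : ℕ → (Fin d → ℝ) → ℝ) (hfm : ∀ i, Measurable (f i))
    (hfbdd : ∀ᵐ ω ∂P, ∃ M : ℝ, ∀ i, |f i (Z ω)| ≤ M)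
    (C₁ C₂ : ℝ) (hC₁ : 0 < C₁) (hC₁₂ : C₁ ≤ C₂)
    (σ : ℕ → ℝ) (hσ : ∀ i, σ i ∈ Set.Icc C₁ C₂)
    (α₁ α₂ : ℝ) (hα₁ : 0 < α₁) (hα₂ : 0 < α₂)
    (ε₁ ε₂ : ℕ → Ω → ℝ) (hε₁m : ∀ i, Measurable (ε₁ i)) (hε₂m : ∀ i, Measurable (ε₂ i))
    (hid₁ : ∀ i, IdentDistrib (ε₁ i) (ε₁ 0) P P)
    (hid₂ : ∀ i, IdentDistrib (ε₂ i) (ε₂ 0) P P)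
    (hindep : iIndepFun (m := fun i => mixCodomMeasurableSpace d i) (mixFun Z ε₁ ε₂) P)
    (htail₁ : Tendsto (fun x : ℝ => x ^ α₁ * (P {ω | x < ε₁ 0 ω}).toReal) atTop (nhds 1))
    (htail₂ : Tendsto (fun x : ℝ => x ^ α₂ * (P {ω | x < ε₂ 0 ω}).toReal) atTop (nhds 1))
    (X₁ X₂ : ℕ → Ω → ℝ)
    (hX₁ : ∀ i ω, X₁ i ω = f i (Z ω) + σ i * ε₁ i ω)
    (hX₂ : ∀ i ω, X₂ i ω = f i (Z ω) + σ i * ε₂ i ω)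
    (α : ℝ) (hα₁α : α₁ = α) (hα₂α : α₂ = α) :
    (∀ p : ℕ, normConst σ α₁ p = normConst σ α₂ p) ∧
    ∀ x : ℝ, 0 < x →
      Tendsto (fun p : ℕ => (P {ω | Qmax X₁ X₂ p p ω ≤ normConst σ α₁ p * x}).toReal) atTop (nhds (frechetCDF α x * frechetCDF α x)) ∧
      frechetCDF α x * frechetCDF α x = Real.exp (-(2 * x ^ (-α))) := by
  subst hα₁α
  subst hα₂α
  refine ⟨fun _ => rfl, fun x hx => ⟨?_, ?_⟩⟩
  swap
  · rw [frechetCDF, if_pos hx, ← Real.exp_add]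
    ring_nf
  have hσpos : ∀ i, 0 < σ i := fun i => hC₁.trans_le (hσ i).1
  set μ := P.map Z with hμ
  haveI : IsProbabilityMeasure μ := Measure.isProbabilityMeasure_map hZm.aemeasurable
  set G₁ : ℝ → ℝ := fun t => (P {ω | t < ε₁ 0 ω}).toReal with hG₁
  set G₂ : ℝ → ℝ := fun t => (P {ω | t < ε₂ 0 ω}).toReal with hG₂
  set F₁ : ℝ → ℝ := fun t => (P {ω | ε₁ 0 ω ≤ t}).toReal with hF₁
  set F₂ : ℝ → ℝ := fun t => (P {ω | ε₂ 0 ω ≤ t}).toReal with hF₂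
  have hFG : ∀ (ε : Ω → ℝ), Measurable ε → ∀ t : ℝ,
      (P {ω | ε ω ≤ t}).toReal = 1 - (P {ω | t < ε ω}).toReal := by
    intro ε hεm t
    have hc : {ω | t < ε ω} = {ω | ε ω ≤ t}ᶜ := by ext ω; simp [not_le]
    rw [hc, prob_compl_eq_one_sub (measurableSet_le hεm measurable_const),
      ENNReal.toReal_sub_of_le prob_le_one ENNReal.one_ne_top, ENNReal.toReal_one]
    ring
  have hF₁G : ∀ t, F₁ t = 1 - G₁ t := fun t => hFG (ε₁ 0) (hε₁m 0) t
  have hF₂G : ∀ t, F₂ t = 1 - G₂ t := fun t => hFG (ε₂ 0) (hε₂m 0) t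
  -- the integrand
  set g : ℕ → (Fin d → ℝ) → ℝ := fun p z =>
    (∏ i ∈ Finset.range p, F₁ ((normConst σ α₂ p * x - f i z) / σ i)) *
    (∏ i ∈ Finset.range p, F₂ ((normConst σ α₂ p * x - f i z) / σ i)) with hg
  -- bounds on F values
  have hF01 : ∀ (ε : Ω → ℝ) (t : ℝ), (0:ℝ) ≤ (P {ω | ε ω ≤ t}).toReal ∧
      (P {ω | ε ω ≤ t}).toReal ≤ 1 := by
    intro ε t
    refine ⟨ENNReal.toReal_nonneg, ?_⟩
    have := ENNReal.toReal_mono ENNReal.one_ne_top (prob_le_one (μ := P) (s := {ω | ε ω ≤ t}))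
    simpa using this
  -- measurability of the integrand
  have hFmono : ∀ (ε : Ω → ℝ), Monotone (fun t => (P {ω | ε ω ≤ t}).toReal) := by
    intro ε t s hts
    exact ENNReal.toReal_mono (measure_ne_top _ _)
      (measure_mono fun ω hω => le_trans hω hts)
  have hgmeas : ∀ p, Measurable (g p) := by
    intro p
    refine Measurable.mul ?_ ?_ <;>
      refine Finset.measurable_prod _ fun i _ => ?_
    · exact ((hFmono (ε₁ 0)).measurable).comp
        ((measurable_const.sub (hfm i)).div_const (σ i))
    · exact ((hFmono (ε₂ 0)).measurable).comp
        ((measurable_const.sub (hfm i)).div_const (σ i))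
  -- a.e. pointwise convergence
  set B : Set (Fin d → ℝ) := ⋃ n : ℕ, ⋂ i, {z | |f i z| ≤ (n:ℝ)} with hB
  have hBm : MeasurableSet B :=
    MeasurableSet.iUnion fun n => MeasurableSet.iInter fun i =>
      measurableSet_le (hfm i).abs measurable_const
  have hae : ∀ᵐ z ∂μ, z ∈ B := by
    rw [hμ]
    refine (ae_map_iff hZm.aemeasurable hBm).mpr ?_
    filter_upwards [hfbdd] with ω hω
    obtain ⟨M, hM⟩ := hω
    refine Set.mem_iUnion.2 ⟨⌈M⌉₊, Set.mem_iInter.2 fun i => ?_⟩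
    exact (hM i).trans (Nat.le_ceil M)
  have hL : Real.exp (-(x ^ (-α₂))) = frechetCDF α₂ x := by
    rw [frechetCDF, if_pos hx]
  have hlim : ∀ᵐ z ∂μ, Tendsto (fun p => g p z) atTop
      (nhds (frechetCDF α₂ x * frechetCDF α₂ x)) := by
    filter_upwards [hae] with z hz
    obtain ⟨n, hn⟩ : ∃ n : ℕ, ∀ i, |f i z| ≤ (n:ℝ) := by
      simpa [hB, Set.mem_iUnion, Set.mem_iInter] using hz
    have h1 := core_prod α₂ C₁ C₂ x n σ (fun i => f i z) G₁ hα₂ hC₁ hC₁₂ hx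
      (Nat.cast_nonneg n) hσ hn (fun t => ENNReal.toReal_nonneg) htail₁
    have h2 := core_prod α₂ C₁ C₂ x n σ (fun i => f i z) G₂ hα₂ hC₁ hC₁₂ hx
      (Nat.cast_nonneg n) hσ hn (fun t => ENNReal.toReal_nonneg) htail₂
    rw [← hL]
    refine (h1.mul h2).congr fun p => ?_
    rw [hg]
    congr 1 <;> refine Finset.prod_congr rfl fun i _ => ?_
    · rw [hF₁G]
    · rw [hF₂G]
  -- dominated convergence
  have hDCT := MeasureTheory.tendsto_integral_of_dominated_convergence
    (F := g) (f := fun _ => frechetCDF α₂ x * frechetCDF α₂ x) (bound := fun _ => (1:ℝ))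
    (fun p => (hgmeas p).aestronglyMeasurable)
    (integrable_const 1)
    (fun p => Filter.Eventually.of_forall fun z => ?_)
    hlim
  swap
  · -- bound
    rw [Real.norm_eq_abs, abs_of_nonneg]
    · refine mul_le_one₀ ?_ ?_ ?_
      · exact Finset.prod_le_one (fun i _ => (hF01 (ε₁ 0) _).1) (fun i _ => (hF01 (ε₁ 0) _).2)
      · exact Finset.prod_nonneg fun i _ => (hF01 (ε₂ 0) _).1
      · exact Finset.prod_le_one (fun i _ => (hF01 (ε₂ 0) _).1) (fun i _ => (hF01 (ε₂ 0) _).2)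
    · exact mul_nonneg (Finset.prod_nonneg fun i _ => (hF01 (ε₁ 0) _).1)
        (Finset.prod_nonneg fun i _ => (hF01 (ε₂ 0) _).1)
  have hconst : (∫ _z, frechetCDF α₂ x * frechetCDF α₂ x ∂μ)
      = frechetCDF α₂ x * frechetCDF α₂ x := by
    simp [integral_const]
  rw [hconst] at hDCT
  refine hDCT.congr' ?_
  filter_upwards [eventually_ge_atTop 1] with p hp
  exact (prob_eq hZm hfm hσpos hε₁m hε₂m hid₁ hid₂ hindep hX₁ hX₂ p hp
    (normConst σ α₂ p * x)).symm
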